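/- Let α = {α_n}_{n≥1} ⊂ (0,1) be a sequence of ratios with associated generalized Cantor set C ⊂ [0,1], and let l_n denote the common length of the 2^{n-1} open intervals removed at stage n. If there exists δ ∈ (0,1) such that ∑_{n=1}^∞ l_n^{1/4^{n/δ}} < ∞, then there exists a constant λ > 0 such that for every ξ ≠ 0, |(χ_C)^(ξ)|² ≤ λ·(1 + (log(1+|ξ|))^δ)/|ξ|², where (χ_C)^ is the Fourier transform of the indicator function of C. -/

import Mathlib

open MeasureTheory
open scoped ENNReal

/-- Length of each of the `2^n` closed intervals making up the `n`-th stage `Cₙ`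
of the generalized Cantor construction with ratios `α` (indexed from `0`,
so `α n` is the ratio `α_{n+1}` of the paper). -/
noncomputable def stageLen (α : ℕ → ℝ) : ℕ → ℝ
  | 0 => 1
  | n + 1 => stageLen α n * (1 - α n) / 2

/-- Left endpoints of the `2^n` closed intervals making up the `n`-th stage,
indexed by `b : Fin n → Bool` (`false` = left child, `true` = right child). -/
noncomputable def leftPt (α : ℕ → ℝ) : (n : ℕ) → (Fin n → Bool) → ℝ
  | 0, _ => 0
  | n + 1, b =>
      leftPt α n (fun i => b i.castSucc) +
        (if b (Fin.last n) then stageLen α n - stageLen α (n + 1) else 0)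

/-- The `n`-th stage `Cₙ` of the generalized Cantor construction: `C₀ = [0,1]`,
and `C_{n+1}` is obtained from `Cₙ` by removing the open middle `α_{n+1}`-th
of each of its `2^n` component closed intervals. -/
noncomputable def cantorStage (α : ℕ → ℝ) (n : ℕ) : Set ℝ :=
  ⋃ b : Fin n → Bool, Set.Icc (leftPt α n b) (leftPt α n b + stageLen α n)

/-- The generalized Cantor set `C = ⋂ₙ Cₙ` associated with the ratios `α`. -/
noncomputable def gCantorSet (α : ℕ → ℝ) : Set ℝ :=
  ⋂ n, cantorStage α n

/-- The common length of the `2^n` open intervals removed when passing from `Cₙ`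
to `C_{n+1}`; this is the quantity `l_{n+1}` of the paper. -/
noncomputable def removedLen (α : ℕ → ℝ) (n : ℕ) : ℝ :=
  stageLen α n * α n



section basic
variable {α : ℕ → ℝ} (hα : ∀ n, α n ∈ Set.Ioo (0 : ℝ) 1)
include hα

lemma stageLen_pos (n : ℕ) : 0 < stageLen α n := by
  induction n with
  | zero => norm_num [stageLen]
  | succ n ih =>
    have h := (hα n).2
    show 0 < stageLen α n * (1 - α n) / 2
    have : 0 < 1 - α n := by linarith
    positivity

lemma two_stageLen_succ_lt (n : ℕ) : 2 * stageLen α (n + 1) < stageLen α n := by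
  have h1 := (hα n).1
  have hp := stageLen_pos hα n
  show 2 * (stageLen α n * (1 - α n) / 2) < stageLen α n
  nlinarith

lemma stageLen_succ_le (n : ℕ) : stageLen α (n + 1) ≤ stageLen α n := by
  have := two_stageLen_succ_lt hα n
  have := stageLen_pos hα (n + 1)
  linarith

omit hα in
lemma leftPt_succ (n : ℕ) (b : Fin (n + 1) → Bool) :
    leftPt α (n + 1) b = leftPt α n (fun i => b i.castSucc) +
      (if b (Fin.last n) then stageLen α n - stageLen α (n + 1) else 0) := rfl

omit hα in
lemma leftPt_snoc (n : ℕ) (b : Fin n → Bool) (c : Bool) :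
    leftPt α (n + 1) (Fin.snoc b c) =
      leftPt α n b + (if c then stageLen α n - stageLen α (n + 1) else 0) := by
  rw [leftPt_succ]
  simp [Fin.snoc_castSucc, Fin.snoc_last]

lemma Icc_subset_parent (n : ℕ) (b : Fin (n + 1) → Bool) :
    Set.Icc (leftPt α (n + 1) b) (leftPt α (n + 1) b + stageLen α (n + 1)) ⊆
      Set.Icc (leftPt α n (fun i => b i.castSucc))
        (leftPt α n (fun i => b i.castSucc) + stageLen α n) := by
  have h2 := two_stageLen_succ_lt hα n
  have hp := stageLen_pos hα (n + 1)
  rw [leftPt_succ]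
  intro x hx
  obtain ⟨h1, h2⟩ := hx
  rcases hb : b (Fin.last n) with _ | _ <;> rw [hb] at h1 h2 <;> simp at h1 h2 <;>
    constructor <;> linarith

lemma cantorStage_succ_subset (n : ℕ) : cantorStage α (n + 1) ⊆ cantorStage α n := by
  intro x hx
  rcases Set.mem_iUnion.1 hx with ⟨b, hb⟩
  exact Set.mem_iUnion.2 ⟨fun i => b i.castSucc, Icc_subset_parent hα n b hb⟩

lemma cantorStage_antitone : Antitone (cantorStage α) := by
  apply antitone_nat_of_succ_le
  exact fun n => cantorStage_succ_subset hα n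

end basic

lemma cantorStage_zero (α : ℕ → ℝ) : cantorStage α 0 = Set.Icc (0:ℝ) 1 := by
  have : ∀ b : Fin 0 → Bool, leftPt α 0 b = 0 := fun _ => rfl
  have h1 : stageLen α 0 = 1 := rfl
  simp only [cantorStage, this, h1, zero_add, Set.iUnion_const]

lemma measurableSet_cantorStage (α : ℕ → ℝ) (n : ℕ) : MeasurableSet (cantorStage α n) :=
  MeasurableSet.iUnion fun _ => measurableSet_Icc

lemma measurableSet_gCantorSet (α : ℕ → ℝ) : MeasurableSet (gCantorSet α) :=
  MeasurableSet.iInter fun n => measurableSet_cantorStage α n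

section disj
variable {α : ℕ → ℝ} (hα : ∀ n, α n ∈ Set.Ioo (0 : ℝ) 1)
include hα

lemma disjoint_Icc (n : ℕ) : ∀ b b' : Fin n → Bool, b ≠ b' →
    Disjoint (Set.Icc (leftPt α n b) (leftPt α n b + stageLen α n))
      (Set.Icc (leftPt α n b') (leftPt α n b' + stageLen α n)) := by
  induction n with
  | zero => intro b b' hne; exact absurd (Subsingleton.elim b b') hne
  | succ n ih =>
    intro b b' hne
    by_cases hpre : (fun i : Fin n => b i.castSucc) = (fun i : Fin n => b' i.castSucc)
    · have hlast : b (Fin.last n) ≠ b' (Fin.last n) := by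
        intro h
        apply hne
        funext i
        induction i using Fin.lastCases with
        | last => exact h
        | cast j => exact congrFun hpre j
      have h2 := two_stageLen_succ_lt hα n
      rw [leftPt_succ, leftPt_succ, hpre]
      rw [Set.disjoint_left]
      intro x hx hx'
      obtain ⟨h1, h2'⟩ := hx
      obtain ⟨h1', h2''⟩ := hx'
      rcases hb : b (Fin.last n) with _ | _ <;> rcases hb' : b' (Fin.last n) with _ | _ <;>
        rw [hb] at h1 h2' <;> rw [hb'] at h1' h2'' <;>
        first
          | exact absurd (hb.trans hb'.symm) hlast
          | (norm_num at h1 h2' h1' h2''; linarith)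
    · exact (ih _ _ hpre).mono (Icc_subset_parent hα n b) (Icc_subset_parent hα n b')

omit hα in
lemma diff_subset_middles (n : ℕ) :
    cantorStage α n \ cantorStage α (n + 1) ⊆
      ⋃ b : Fin n → Bool,
        Set.Ioo (leftPt α n b + stageLen α (n + 1))
          (leftPt α n b + stageLen α n - stageLen α (n + 1)) := by
  rintro x ⟨hx, hx'⟩
  rcases Set.mem_iUnion.1 hx with ⟨b, h1, h2⟩
  refine Set.mem_iUnion.2 ⟨b, ?_, ?_⟩
  · by_contra hcon
    push_neg at hcon
    refine hx' (Set.mem_iUnion.2 ⟨Fin.snoc b false, ?_⟩)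
    rw [Set.mem_Icc, leftPt_snoc]
    simp only [Bool.false_eq_true, if_false, add_zero]
    exact ⟨h1, hcon⟩
  · by_contra hcon
    push_neg at hcon
    refine hx' (Set.mem_iUnion.2 ⟨Fin.snoc b true, ?_⟩)
    rw [Set.mem_Icc, leftPt_snoc]
    norm_num
    constructor <;> linarith

omit hα in
lemma volume_diff_le (n : ℕ) :
    volume (cantorStage α n \ cantorStage α (n + 1)) ≤
      ENNReal.ofReal (2 ^ n * removedLen α n) := by
  refine (measure_mono (diff_subset_middles n)).trans ?_
  refine (measure_iUnion_le _).trans ?_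
  have hv : ∀ b : Fin n → Bool,
      volume (Set.Ioo (leftPt α n b + stageLen α (n + 1))
        (leftPt α n b + stageLen α n - stageLen α (n + 1))) =
      ENNReal.ofReal (removedLen α n) := by
    intro b
    rw [Real.volume_Ioo]
    congr 1
    show _ = stageLen α n * α n
    have : stageLen α (n+1) = stageLen α n * (1 - α n) / 2 := rfl
    rw [this]; ring
  calc ∑' b : Fin n → Bool, volume (Set.Ioo (leftPt α n b + stageLen α (n + 1))
        (leftPt α n b + stageLen α n - stageLen α (n + 1)))
      = ∑' _ : Fin n → Bool, ENNReal.ofReal (removedLen α n) := by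
        exact tsum_congr hv
    _ = (2 ^ n : ℝ≥0∞) * ENNReal.ofReal (removedLen α n) := by
        rw [tsum_fintype, Finset.sum_const, Finset.card_univ]
        simp [Fintype.card_fun, nsmul_eq_mul]
    _ ≤ ENNReal.ofReal (2 ^ n * removedLen α n) := le_of_eq (by
        rw [ENNReal.ofReal_mul (by positivity : (0:ℝ) ≤ 2 ^ n), ENNReal.ofReal_pow (by norm_num)]
        norm_num)

end disj

open Real FourierTransform in
lemma norm_integral_Icc_le (a L ξ : ℝ) (hξ : ξ ≠ 0) (hL : 0 < L) :
    ‖∫ x in Set.Icc a (a + L), (Real.fourierChar (-(x * ξ)) : Circle) • (1:ℂ)‖ ≤ 1 / |ξ| := by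
  have hab : a ≤ a + L := by linarith
  have hpi := Real.pi_pos
  set c : ℂ := ((-2 * Real.pi * ξ : ℝ) : ℂ) * Complex.I with hcdef
  have hc : c ≠ 0 := by
    simp only [hcdef, ne_eq, mul_eq_zero, Complex.I_ne_zero, or_false, Complex.ofReal_eq_zero]
    rintro ((h | h) | h)
    · norm_num at h
    · linarith
    · exact hξ h
  have hfun : ∀ x : ℝ, (Real.fourierChar (-(x * ξ)) : Circle) • (1:ℂ) = Complex.exp (c * x) := by
    intro x
    simp only [Circle.smul_def, Real.fourierChar_apply, smul_eq_mul, mul_one]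
    rw [hcdef]
    congr 1
    push_cast
    ring
  have hnorm1 : ∀ x : ℝ, ‖Complex.exp (c * x)‖ = 1 := by
    intro x
    rw [hcdef, mul_right_comm, ← Complex.ofReal_mul]
    exact Complex.norm_exp_ofReal_mul_I _
  have hcnorm : ‖c‖ = 2 * Real.pi * |ξ| := by
    rw [hcdef, norm_mul, Complex.norm_I, mul_one, Complex.norm_real, Real.norm_eq_abs]
    rw [abs_mul, abs_mul]
    rw [abs_of_nonpos (by norm_num : (-2:ℝ) ≤ 0), abs_of_pos hpi]
    norm_num
  calc ‖∫ x in Set.Icc a (a + L), (Real.fourierChar (-(x * ξ)) : Circle) • (1:ℂ)‖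
      = ‖∫ x in a..(a + L), Complex.exp (c * x)‖ := by
        rw [intervalIntegral.integral_of_le hab, ← MeasureTheory.integral_Icc_eq_integral_Ioc]
        simp_rw [hfun]
    _ = ‖(Complex.exp (c * ((a + L : ℝ) : ℂ)) - Complex.exp (c * a)) / c‖ := by
        rw [integral_exp_mul_complex hc]
    _ ≤ (‖Complex.exp (c * ((a + L : ℝ) : ℂ))‖ + ‖Complex.exp (c * a)‖) / ‖c‖ := by
        rw [norm_div]
        gcongr
        exact norm_sub_le _ _
    _ ≤ 2 / (2 * Real.pi * |ξ|) := by
        rw [hnorm1, hnorm1 a, hcnorm]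
        norm_num
    _ ≤ 1 / |ξ| := by
        rw [div_le_div_iff₀ (by positivity) (by positivity : (0:ℝ) < |ξ|)]
        have : 1 ≤ Real.pi := by nlinarith [Real.pi_gt_three]
        nlinarith [abs_pos.2 hξ]

section fourier
open Real FourierTransform
variable {α : ℕ → ℝ} (hα : ∀ n, α n ∈ Set.Ioo (0 : ℝ) 1)
include hα

lemma cantorStage_subset_Icc (n : ℕ) : cantorStage α n ⊆ Set.Icc (0:ℝ) 1 := by
  rw [← cantorStage_zero α]
  exact cantorStage_antitone hα (Nat.zero_le n)

omit hα in
lemma gCantor_subset (n : ℕ) : gCantorSet α ⊆ cantorStage α n := Set.iInter_subset _ n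

lemma isCompact_cantorStage (n : ℕ) : IsCompact (cantorStage α n) :=
  isCompact_iUnion fun _ => isCompact_Icc

lemma integrable_indicator_cantorStage (n : ℕ) :
    Integrable ((cantorStage α n).indicator fun _ => (1:ℂ)) := by
  rw [integrable_indicator_iff (measurableSet_cantorStage α n)]
  refine integrableOn_const (ne_of_lt ?_) (by simp)
  exact lt_of_le_of_lt (measure_mono (cantorStage_subset_Icc hα n)) measure_Icc_lt_top

lemma integrable_indicator_gCantor :
    Integrable ((gCantorSet α).indicator fun _ => (1:ℂ)) := by
  rw [integrable_indicator_iff (measurableSet_gCantorSet α)]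
  refine integrableOn_const (ne_of_lt ?_) (by simp)
  refine lt_of_le_of_lt (measure_mono ((gCantor_subset 0).trans ?_)) (measure_Icc_lt_top (a := (0:ℝ)) (b := 1))
  rw [cantorStage_zero α]

lemma integrable_indicator_diff (n : ℕ) :
    Integrable ((cantorStage α n \ gCantorSet α).indicator fun _ => (1:ℂ)) := by
  rw [integrable_indicator_iff ((measurableSet_cantorStage α n).diff (measurableSet_gCantorSet α))]
  refine integrableOn_const (ne_of_lt ?_) (by simp)
  refine lt_of_le_of_lt (measure_mono ((Set.diff_subset).trans (cantorStage_subset_Icc hα n)))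
    (measure_Icc_lt_top)

omit hα in
lemma fourier_indicator_eq (S : Set ℝ) (hS : MeasurableSet S) (ξ : ℝ) :
    FourierTransform.fourier (S.indicator fun _ => (1:ℂ)) ξ
      = ∫ x in S, (Real.fourierChar (-(x * ξ)) : Circle) • (1:ℂ) := by
  rw [Real.fourier_real_eq, ← MeasureTheory.integral_indicator hS]
  congr 1
  funext v
  by_cases hv : v ∈ S <;> simp [hv]

lemma norm_fourier_stage_le (N : ℕ) (ξ : ℝ) (hξ : ξ ≠ 0) :
    ‖FourierTransform.fourier ((cantorStage α N).indicator fun _ => (1:ℂ)) ξ‖ ≤ 2 ^ N / |ξ| := by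
  rw [fourier_indicator_eq _ (measurableSet_cantorStage α N)]
  have hcont : Continuous fun x : ℝ => (Real.fourierChar (-(x * ξ)) : Circle) • (1:ℂ) := by
    have h1 : Continuous fun x : ℝ => -(x * ξ) := by continuity
    exact (Real.continuous_fourierChar.comp h1).smul continuous_const
  have hint : IntegrableOn (fun x : ℝ => (Real.fourierChar (-(x * ξ)) : Circle) • (1:ℂ))
      (⋃ b : Fin N → Bool, Set.Icc (leftPt α N b) (leftPt α N b + stageLen α N)) volume :=
    hcont.continuousOn.integrableOn_compact (isCompact_cantorStage hα N)
  have := MeasureTheory.integral_iUnion (μ := volume)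
    (s := fun b : Fin N → Bool => Set.Icc (leftPt α N b) (leftPt α N b + stageLen α N))
    (f := fun x : ℝ => (Real.fourierChar (-(x * ξ)) : Circle) • (1:ℂ))
    (fun _ => measurableSet_Icc)
    (fun b b' hbb' => disjoint_Icc hα N b b' hbb') hint
  rw [show (cantorStage α N) = ⋃ b : Fin N → Bool,
      Set.Icc (leftPt α N b) (leftPt α N b + stageLen α N) from rfl, this, tsum_fintype]
  refine (norm_sum_le _ _).trans ?_
  calc ∑ b : Fin N → Bool, ‖∫ x in Set.Icc (leftPt α N b) (leftPt α N b + stageLen α N),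
          (Real.fourierChar (-(x * ξ)) : Circle) • (1:ℂ)‖
      ≤ ∑ _b : Fin N → Bool, 1 / |ξ| :=
        Finset.sum_le_sum fun b _ => norm_integral_Icc_le _ _ _ hξ (stageLen_pos hα N)
    _ = 2 ^ N / |ξ| := by
        rw [Finset.sum_const, Finset.card_univ]
        simp [Fintype.card_fun, nsmul_eq_mul]
        ring

lemma norm_fourier_gCantor_le (N : ℕ) (ξ : ℝ) (hξ : ξ ≠ 0) :
    ‖FourierTransform.fourier ((gCantorSet α).indicator fun _ => (1:ℂ)) ξ‖ ≤
      2 ^ N / |ξ| + (volume (cantorStage α N \ gCantorSet α)).toReal := by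
  have hCsub : gCantorSet α ⊆ cantorStage α N := gCantor_subset N
  have hsplit : (cantorStage α N).indicator (fun _ => (1:ℂ)) =
      (gCantorSet α).indicator (fun _ => (1:ℂ)) +
        (cantorStage α N \ gCantorSet α).indicator (fun _ => (1:ℂ)) := by
    funext x
    by_cases h1 : x ∈ gCantorSet α
    · have : x ∉ cantorStage α N \ gCantorSet α := fun hh => hh.2 h1
      simp [Set.indicator_of_mem, Set.indicator_of_notMem, h1, hCsub h1, this]
    · by_cases h2 : x ∈ cantorStage α N
      · have : x ∈ cantorStage α N \ gCantorSet α := ⟨h2, h1⟩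
        simp [Set.indicator_of_mem, Set.indicator_of_notMem, h1, h2, this]
      · have : x ∉ cantorStage α N \ gCantorSet α := fun hh => h2 hh.1
        simp [Set.indicator_of_notMem, h1, h2, this]
  have hLcont : Continuous fun p : ℝ × ℝ => (innerₗ ℝ) p.1 p.2 := continuous_inner
  have hadd := VectorFourier.fourierIntegral_add (μ := volume) (L := innerₗ ℝ)
    Real.continuous_fourierChar hLcont (integrable_indicator_gCantor hα)
    (integrable_indicator_diff hα N)
  have key : FourierTransform.fourier ((cantorStage α N).indicator fun _ => (1:ℂ)) ξ =
      FourierTransform.fourier ((gCantorSet α).indicator fun _ => (1:ℂ)) ξ +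
        FourierTransform.fourier ((cantorStage α N \ gCantorSet α).indicator fun _ => (1:ℂ)) ξ := by
    show VectorFourier.fourierIntegral _ _ _ _ ξ = _
    rw [hsplit]
    rw [show VectorFourier.fourierIntegral Real.fourierChar volume (innerₗ ℝ)
      ((gCantorSet α).indicator (fun _ => (1:ℂ)) +
        (cantorStage α N \ gCantorSet α).indicator (fun _ => (1:ℂ))) = _ from hadd]
    rfl
  have hD : ‖FourierTransform.fourier ((cantorStage α N \ gCantorSet α).indicator fun _ => (1:ℂ)) ξ‖
      ≤ (volume (cantorStage α N \ gCantorSet α)).toReal := by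
    refine (VectorFourier.norm_fourierIntegral_le_integral_norm _ _ _ _ _).trans ?_
    have : (fun v : ℝ => ‖(cantorStage α N \ gCantorSet α).indicator (fun _ => (1:ℂ)) v‖) =
        (cantorStage α N \ gCantorSet α).indicator (fun _ => (1:ℝ)) := by
      funext v
      rw [norm_indicator_eq_indicator_norm]
      simp
    rw [this, MeasureTheory.integral_indicator_const (1:ℝ)
      ((measurableSet_cantorStage α N).diff (measurableSet_gCantorSet α))]
    simp
    exact le_of_eq rfl
  calc ‖FourierTransform.fourier ((gCantorSet α).indicator fun _ => (1:ℂ)) ξ‖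
      = ‖FourierTransform.fourier ((cantorStage α N).indicator fun _ => (1:ℂ)) ξ -
          FourierTransform.fourier ((cantorStage α N \ gCantorSet α).indicator fun _ => (1:ℂ)) ξ‖ := by
        rw [key]; ring_nf
    _ ≤ ‖FourierTransform.fourier ((cantorStage α N).indicator fun _ => (1:ℂ)) ξ‖ +
        ‖FourierTransform.fourier ((cantorStage α N \ gCantorSet α).indicator fun _ => (1:ℂ)) ξ‖ :=
        norm_sub_le _ _
    _ ≤ 2 ^ N / |ξ| + (volume (cantorStage α N \ gCantorSet α)).toReal := by
        exact add_le_add (norm_fourier_stage_le hα N ξ hξ) hD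

lemma volume_tail_le' (N : ℕ) :
    volume (cantorStage α N \ gCantorSet α) ≤
      ∑' m : ℕ, volume (cantorStage α (N + m) \ cantorStage α (N + m + 1)) := by
  refine (measure_mono ?_).trans (measure_iUnion_le _)
  rintro x ⟨hx, hx'⟩
  rw [gCantorSet, Set.mem_iInter] at hx'
  push_neg at hx'
  obtain ⟨n, hn⟩ := hx'
  by_contra hmem
  rw [Set.mem_iUnion] at hmem
  push_neg at hmem
  have hall : ∀ m, x ∈ cantorStage α (N + m) := by
    intro m
    induction m with
    | zero => simpa using hx
    | succ m ih =>
      have h := hmem m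
      rw [Set.mem_diff] at h
      push_neg at h
      exact h ih
  rcases le_total n N with h | h
  · exact hn (cantorStage_antitone hα h hx)
  · obtain ⟨m, rfl⟩ := Nat.exists_eq_add_of_le h
    exact hn (hall m)

end fourier

lemma four_pow_ge (m : ℕ) : (m : ℝ) + 1 ≤ 4 ^ m := by
  induction m with
  | zero => norm_num
  | succ m ih =>
    have : (4:ℝ) ^ (m + 1) = 4 * 4 ^ m := by ring
    rw [this]
    push_cast
    nlinarith

lemma exp_ineq (δ : ℝ) (hδ0 : 0 < δ) (hδ1 : δ ≤ 1) (L : ℝ) (hL : 0 ≤ L) (N m : ℕ)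
    (hS : L + 2 * (N:ℝ) + 1 ≤ (4:ℝ) ^ ((N:ℝ) / δ)) :
    (N:ℝ) + 2 * m + 1 + L ≤ (4:ℝ) ^ (((N:ℝ) + m + 1) / δ) := by
  have h4 : (0:ℝ) < 4 := by norm_num
  have h1 : (4:ℝ) ^ (((N:ℝ) + m + 1) / δ) = (4:ℝ) ^ ((N:ℝ) / δ) * (4:ℝ) ^ (((m:ℝ) + 1) / δ) := by
    rw [← Real.rpow_add h4]
    congr 1
    ring
  have h2 : ((m:ℝ) + 1) ≤ ((m:ℝ) + 1) / δ := by
    rw [le_div_iff₀ hδ0]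
    nlinarith [Nat.cast_nonneg (α := ℝ) m]
  have h3 : (4:ℝ) ^ (((m:ℝ) + 1)) ≤ (4:ℝ) ^ (((m:ℝ) + 1) / δ) :=
    Real.rpow_le_rpow_of_exponent_le (by norm_num) h2
  have h4' : (4:ℝ) ^ ((m:ℝ) + 1) = (4:ℝ) ^ (m + 1 : ℕ) := by
    rw [← Real.rpow_natCast]
    push_cast
    ring_nf
  have h5 : 4 * ((m:ℝ) + 1) ≤ (4:ℝ) ^ (m + 1 : ℕ) := by
    have := four_pow_ge m
    have : (4:ℝ) ^ (m + 1 : ℕ) = 4 * 4 ^ m := by ring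
    rw [this]
    nlinarith [four_pow_ge m]
  have h6 : 4 * ((m:ℝ) + 1) ≤ (4:ℝ) ^ (((m:ℝ) + 1) / δ) := by
    rw [← h4'] at h5
    linarith
  have hN0 : (0:ℝ) ≤ (N:ℝ) := Nat.cast_nonneg _
  have hm0 : (0:ℝ) ≤ (m:ℝ) := Nat.cast_nonneg _
  rw [h1]
  nlinarith [mul_le_mul hS h6 (by positivity) (le_trans (by linarith) hS)]

section tailvol
open Real
variable {α : ℕ → ℝ} (hα : ∀ n, α n ∈ Set.Ioo (0 : ℝ) 1)
include hα

lemma tail_vol (δ : ℝ) (hδ0 : 0 < δ) (hδ1 : δ ≤ 1) (n₀ : ℕ)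
    (hsmall : ∀ n, n₀ ≤ n → removedLen α n ≤ (2:ℝ) ^ (-((4:ℝ) ^ (((n:ℝ) + 1) / δ))))
    (N : ℕ) (hN : n₀ ≤ N) (ξ : ℝ) (hξ : 1 ≤ |ξ|)
    (hS : Real.logb 2 |ξ| + 2 * (N:ℝ) + 1 ≤ (4:ℝ) ^ ((N:ℝ) / δ)) :
    volume (cantorStage α N \ gCantorSet α) ≤ ENNReal.ofReal (1 / |ξ|) := by
  have hξ0 : (0:ℝ) < |ξ| := by linarith
  have hL : 0 ≤ Real.logb 2 |ξ| := Real.logb_nonneg one_lt_two hξ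
  set L := Real.logb 2 |ξ| with hLdef
  have hxiL : |ξ| = (2:ℝ) ^ L := (Real.rpow_logb (by norm_num) (by norm_num) hξ0).symm
  have key : ∀ m : ℕ, volume (cantorStage α (N + m) \ cantorStage α (N + m + 1)) ≤
      ENNReal.ofReal ((1/2 : ℝ) ^ m * (1 / (2 * |ξ|))) := by
    intro m
    refine (volume_diff_le (N + m)).trans (ENNReal.ofReal_le_ofReal ?_)
    have hrl : removedLen α (N + m) ≤ (2:ℝ) ^ (-((4:ℝ) ^ ((((N + m : ℕ) :ℝ) + 1) / δ))) :=
      hsmall (N + m) (le_trans hN (Nat.le_add_right _ _))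
    have hEineq : ((N:ℝ)) + 2 * m + 1 + L ≤ (4:ℝ) ^ (((N:ℝ) + m + 1) / δ) :=
      exp_ineq δ hδ0 hδ1 L hL N m hS
    have hcast : (((N + m : ℕ) : ℝ) + 1) / δ = ((N:ℝ) + m + 1) / δ := by push_cast; ring_nf
    rw [hcast] at hrl
    have h2pow : (2:ℝ) ^ (N + m : ℕ) = (2:ℝ) ^ ((N:ℝ) + m) := by
      rw [← Real.rpow_natCast]
      push_cast
      ring_nf
    calc (2:ℝ) ^ (N + m : ℕ) * removedLen α (N + m)
        ≤ (2:ℝ) ^ ((N:ℝ) + m) * (2:ℝ) ^ (-((4:ℝ) ^ (((N:ℝ) + m + 1) / δ))) := by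
          rw [h2pow]
          have := stageLen_pos hα (N + m)
          have := (hα (N + m)).1
          exact mul_le_mul_of_nonneg_left hrl (by positivity)
      _ = (2:ℝ) ^ ((N:ℝ) + m - (4:ℝ) ^ (((N:ℝ) + m + 1) / δ)) := by
          rw [← Real.rpow_add (by norm_num)]
          ring_nf
      _ ≤ (2:ℝ) ^ (-((m:ℝ) + 1 + L)) := by
          apply Real.rpow_le_rpow_of_exponent_le (by norm_num)
          linarith
      _ = (1/2 : ℝ) ^ m * (1 / (2 * |ξ|)) := by
          rw [hxiL]
          rw [show -((m:ℝ) + 1 + L) = -(m:ℝ) + (-1) + (-L) by ring]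
          rw [Real.rpow_add (by norm_num), Real.rpow_add (by norm_num)]
          rw [Real.rpow_neg (by norm_num) (m:ℝ), Real.rpow_natCast]
          rw [Real.rpow_neg (by norm_num) L]
          rw [show ((-1:ℝ)) = ((-1 : ℤ) : ℝ) by norm_num, Real.rpow_intCast]
          field_simp
          rw [← mul_pow]; norm_num
  refine (volume_tail_le' hα N).trans ?_
  calc ∑' m : ℕ, volume (cantorStage α (N + m) \ cantorStage α (N + m + 1))
      ≤ ∑' m : ℕ, ENNReal.ofReal ((1/2 : ℝ) ^ m * (1 / (2 * |ξ|))) := ENNReal.tsum_le_tsum key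
    _ = ENNReal.ofReal (∑' m : ℕ, (1/2 : ℝ) ^ m * (1 / (2 * |ξ|))) := by
        rw [ENNReal.ofReal_tsum_of_nonneg (fun m => by positivity)
          (summable_geometric_two.mul_right _)]
    _ = ENNReal.ofReal (1 / |ξ|) := by
        rw [tsum_mul_right, tsum_geometric_two]
        congr 1
        field_simp

end tailvol

lemma norm_fourier_gCantor_le_one (α : ℕ → ℝ) (ξ : ℝ) :
    ‖FourierTransform.fourier ((gCantorSet α).indicator fun _ => (1:ℂ)) ξ‖ ≤ 1 := by
  refine (VectorFourier.norm_fourierIntegral_le_integral_norm _ _ _ _ _).trans ?_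
  have heq : (fun v : ℝ => ‖(gCantorSet α).indicator (fun _ => (1:ℂ)) v‖) =
      (gCantorSet α).indicator (fun _ => (1:ℝ)) := by
    funext v
    rw [norm_indicator_eq_indicator_norm]
    simp
  rw [heq, MeasureTheory.integral_indicator_const (1:ℝ) (measurableSet_gCantorSet α),
    smul_eq_mul, mul_one]
  have h1 : volume (gCantorSet α) ≤ ENNReal.ofReal 1 := by
    refine le_trans (measure_mono ((gCantor_subset 0).trans (cantorStage_zero α).subset)) ?_
    simp [Real.volume_Icc]
  exact ENNReal.toReal_le_of_le_ofReal (by norm_num) h1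

lemma one_add_rpow_le (t δ : ℝ) (ht : 0 ≤ t) (hδ0 : 0 ≤ δ) (hδ1 : δ ≤ 1) :
    (1 + t) ^ δ ≤ 2 * (1 + t ^ δ) := by
  have htδ : 0 ≤ t ^ δ := Real.rpow_nonneg ht δ
  rcases le_total t 1 with h | h
  · have h1 : (1 + t) ^ δ ≤ (2:ℝ) ^ δ := Real.rpow_le_rpow (by linarith) (by linarith) hδ0
    have h2 : (2:ℝ) ^ δ ≤ (2:ℝ) ^ (1:ℝ) :=
      Real.rpow_le_rpow_of_exponent_le (by norm_num) hδ1
    rw [Real.rpow_one] at h2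
    nlinarith
  · have h1 : (1 + t) ^ δ ≤ (2 * t) ^ δ := Real.rpow_le_rpow (by linarith) (by linarith) hδ0
    have h2 : (2 * t) ^ δ = (2:ℝ) ^ δ * t ^ δ := Real.mul_rpow (by norm_num) (by linarith)
    have h3 : (2:ℝ) ^ δ ≤ (2:ℝ) ^ (1:ℝ) :=
      Real.rpow_le_rpow_of_exponent_le (by norm_num) hδ1
    rw [Real.rpow_one] at h3
    nlinarith

set_option maxHeartbeats 1000000 in
/-- If the removed lengths `l_n` of a generalized Cantor set `C`
satisfy `∑ₙ l_n^(1/4^(n/δ)) < ∞` for some `δ ∈ (0,1)`, then there is `λ > 0` with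
`|𝓕(χ_C)(ξ)|² ≤ λ (1 + log^δ(1+|ξ|)) / |ξ|²` for all `ξ ≠ 0`.
(Here `removedLen α n` is the paper's `l_{n+1}`.) -/
theorem stmt0 (α : ℕ → ℝ) (hα : ∀ n, α n ∈ Set.Ioo (0 : ℝ) 1) (δ : ℝ)
    (hδ : δ ∈ Set.Ioo (0 : ℝ) 1)
    (hsum : Summable fun n : ℕ => removedLen α n ^ ((4 : ℝ) ^ (-((n : ℝ) + 1) / δ))) :
    ∃ lam > (0 : ℝ), ∀ ξ : ℝ, ξ ≠ 0 →
      ‖FourierTransform.fourier ((gCantorSet α).indicator fun _ => (1 : ℂ)) ξ‖ ^ 2 ≤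
        lam * (1 + Real.log (1 + |ξ|) ^ δ) / |ξ| ^ 2 := by
  obtain ⟨hδ0, hδ1⟩ := hδ
  -- Step 1: find n₀ such that removed lengths are super-exponentially small
  have hev : ∀ᶠ n : ℕ in Filter.atTop,
      removedLen α n ^ ((4 : ℝ) ^ (-((n : ℝ) + 1) / δ)) < 1/2 :=
    hsum.tendsto_atTop_zero.eventually_lt_const (by norm_num)
  obtain ⟨n₀, hn₀⟩ := Filter.eventually_atTop.1 hev
  have hsmall : ∀ n, n₀ ≤ n →
      removedLen α n ≤ (2:ℝ) ^ (-((4:ℝ) ^ (((n:ℝ) + 1) / δ))) := by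
    intro n hn
    have h := (hn₀ n hn).le
    have hrpos : 0 < removedLen α n := mul_pos (stageLen_pos hα n) (hα n).1
    set ε : ℝ := (4:ℝ) ^ (-((n:ℝ) + 1) / δ) with hε
    have hεpos : 0 < ε := Real.rpow_pos_of_pos (by norm_num) _
    have hεinv : ε⁻¹ = (4:ℝ) ^ (((n:ℝ) + 1) / δ) := by
      rw [hε, show -((n:ℝ) + 1) / δ = -(((n:ℝ) + 1) / δ) by ring,
        Real.rpow_neg (by norm_num), inv_inv]
    have h1 : removedLen α n = (removedLen α n ^ ε) ^ ε⁻¹ := by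
      rw [← Real.rpow_mul hrpos.le, mul_inv_cancel₀ hεpos.ne', Real.rpow_one]
    rw [h1]
    have h2 : (removedLen α n ^ ε) ^ ε⁻¹ ≤ ((1:ℝ)/2) ^ ε⁻¹ :=
      Real.rpow_le_rpow (Real.rpow_nonneg hrpos.le ε) h (inv_nonneg.2 hεpos.le)
    refine h2.trans (le_of_eq ?_)
    rw [hεinv, one_div, Real.inv_rpow (by norm_num), ← Real.rpow_neg (by norm_num)]
  -- the constant
  refine ⟨(4:ℝ) ^ (2 * n₀ + 7), by positivity, ?_⟩
  intro ξ hξ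
  have hξ0 : (0:ℝ) < |ξ| := abs_pos.2 hξ
  set t : ℝ := Real.log (1 + |ξ|) with htdef
  have ht0 : 0 ≤ t := Real.log_nonneg (by linarith)
  have htδ : 0 ≤ t ^ δ := Real.rpow_nonneg ht0 δ
  have hlam1 : (1:ℝ) ≤ (4:ℝ) ^ (2 * n₀ + 7) := one_le_pow₀ (by norm_num)
  rcases lt_or_ge |ξ| 1 with hξ1 | hξ1
  · -- small frequency: trivial bound
    have hF := norm_fourier_gCantor_le_one α ξ
    have hF2 : ‖FourierTransform.fourier ((gCantorSet α).indicator fun _ => (1 : ℂ)) ξ‖ ^ 2 ≤ 1 :=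
      pow_le_one₀ (norm_nonneg _) hF
    refine hF2.trans ?_
    rw [le_div_iff₀ (by positivity)]
    have hx2 : |ξ| ^ 2 ≤ 1 := by nlinarith [abs_nonneg ξ]
    have h2 : (1:ℝ) ≤ (4:ℝ) ^ (2 * n₀ + 7) * (1 + t ^ δ) := by nlinarith
    linarith
  · -- large frequency
    set L : ℝ := Real.logb 2 |ξ| with hLdef
    have hL0 : 0 ≤ L := Real.logb_nonneg one_lt_two hξ1
    set c : ℝ := δ * Real.logb 4 (1 + t) with hcdef
    have hlogb0 : 0 ≤ Real.logb 4 (1 + t) := Real.logb_nonneg (by norm_num) (by linarith)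
    have hc0 : 0 ≤ c := mul_nonneg hδ0.le hlogb0
    set N : ℕ := 2 * n₀ + 4 + ⌈c⌉₊ with hNdef
    have hNn₀ : n₀ ≤ N := by omega
    have hcle : (⌈c⌉₊ : ℝ) ≤ c + 1 := (Nat.ceil_lt_add_one hc0).le
    have hcge : c ≤ (⌈c⌉₊ : ℝ) := Nat.le_ceil c
    have hNreal : (N:ℝ) = 2 * n₀ + 4 + (⌈c⌉₊ : ℝ) := by
      rw [hNdef]; push_cast; ring
    have h4logb : (4:ℝ) ^ (Real.logb 4 (1 + t)) = 1 + t :=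
      Real.rpow_logb (by norm_num) (by norm_num) (by linarith)
    have h4c : (4:ℝ) ^ c = (1 + t) ^ δ := by
      rw [show c = Real.logb 4 (1 + t) * δ by rw [hcdef]; ring,
        Real.rpow_mul (by norm_num), h4logb]
    have hlog4 : 1 ≤ Real.log 4 := by
      rw [show (4:ℝ) = 2 ^ (2:ℕ) by norm_num, Real.log_pow]
      push_cast
      nlinarith [Real.log_two_gt_d9]
    have hlogb_le : Real.logb 4 (1 + t) ≤ t := by
      rw [Real.logb]
      have h1 : Real.log (1 + t) ≤ t := by
        have := Real.log_le_sub_one_of_pos (show (0:ℝ) < 1 + t by linarith)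
        linarith
      have h2 : Real.log (1 + t) / Real.log 4 ≤ Real.log (1 + t) :=
        div_le_self (Real.log_nonneg (by linarith)) hlog4
      linarith
    have hlog2pos : (0:ℝ) < Real.log 2 := Real.log_pos (by norm_num)
    have hL2t : L ≤ 2 * t := by
      have h1 : Real.log |ξ| ≤ t := Real.log_le_log hξ0 (by linarith)
      have h2 : L ≤ t / Real.log 2 := by
        rw [hLdef, Real.logb]
        exact (div_le_div_iff_of_pos_right hlog2pos).2 h1
      have h3 : t / Real.log 2 ≤ 2 * t := by
        rw [div_le_iff₀ hlog2pos]
        nlinarith [Real.log_two_gt_d9]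
      linarith
    have hstep : (2 * (n₀:ℝ) + 4) + Real.logb 4 (1 + t) ≤ (N:ℝ) / δ := by
      rw [le_div_iff₀ hδ0]
      have hcc : Real.logb 4 (1 + t) * δ = c := by rw [hcdef]; ring
      rw [hNreal]
      nlinarith [hcge, Nat.cast_nonneg (α := ℝ) n₀]
    have hSlow : (4:ℝ) ^ (2 * (n₀:ℝ) + 4) * (1 + t) ≤ (4:ℝ) ^ ((N:ℝ) / δ) :=
      calc (4:ℝ) ^ (2 * (n₀:ℝ) + 4) * (1 + t)
          = (4:ℝ) ^ (2 * (n₀:ℝ) + 4) * (4:ℝ) ^ (Real.logb 4 (1 + t)) := by rw [h4logb]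
        _ = (4:ℝ) ^ ((2 * (n₀:ℝ) + 4) + Real.logb 4 (1 + t)) :=
            (Real.rpow_add (by norm_num) _ _).symm
        _ ≤ (4:ℝ) ^ ((N:ℝ) / δ) := Real.rpow_le_rpow_of_exponent_le (by norm_num) hstep
    have hpow4 : 8 * (n₀:ℝ) + 16 ≤ (4:ℝ) ^ (2 * (n₀:ℝ) + 4) := by
      have h1 := four_pow_ge (2 * n₀ + 3)
      have h2 : (4:ℝ) ^ (2 * (n₀:ℝ) + 4) = 4 * (4:ℝ) ^ (2 * n₀ + 3 : ℕ) := by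
        rw [← Real.rpow_natCast (4:ℝ) (2 * n₀ + 3),
          show (2 * (n₀:ℝ) + 4) = ((2 * n₀ + 3 : ℕ) : ℝ) + 1 by push_cast; ring,
          Real.rpow_add (by norm_num : (0:ℝ) < 4), Real.rpow_one]
        ring
      rw [h2]
      push_cast at h1
      nlinarith
    have hNle : (N:ℝ) ≤ 2 * n₀ + 5 + t := by
      rw [hNreal]
      have hcle' : c ≤ t := by
        have : c ≤ Real.logb 4 (1 + t) := by
          rw [hcdef]
          nlinarith
        linarith
      linarith
    have hS : L + 2 * (N:ℝ) + 1 ≤ (4:ℝ) ^ ((N:ℝ) / δ) := by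
      have hmain : L + 2 * (N:ℝ) + 1 ≤ (4:ℝ) ^ (2 * (n₀:ℝ) + 4) * (1 + t) := by
        nlinarith [mul_nonneg (Nat.cast_nonneg (α := ℝ) n₀) ht0]
      linarith
    -- upper bound for 4^N
    have h4N : (4:ℝ) ^ (N:ℕ) ≤ (4:ℝ) ^ (2 * n₀ + 6 : ℕ) * (1 + t ^ δ) := by
      have e1 : (4:ℝ) ^ (N:ℕ) = (4:ℝ) ^ (2 * n₀ + 4 : ℕ) * (4:ℝ) ^ (⌈c⌉₊ : ℕ) := by
        rw [hNdef, pow_add]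
      have e2 : (4:ℝ) ^ (⌈c⌉₊ : ℕ) ≤ (4:ℝ) ^ (c + 1) := by
        rw [← Real.rpow_natCast (4:ℝ) ⌈c⌉₊]
        exact Real.rpow_le_rpow_of_exponent_le (by norm_num) hcle
      have e3 : (4:ℝ) ^ (c + 1) = (1 + t) ^ δ * 4 := by
        rw [Real.rpow_add (by norm_num : (0:ℝ) < 4), h4c, Real.rpow_one]
      have e4 : (1 + t) ^ δ ≤ 2 * (1 + t ^ δ) := one_add_rpow_le t δ ht0 hδ0.le hδ1.le
      have e5 : (4:ℝ) ^ (2 * n₀ + 6 : ℕ) = (4:ℝ) ^ (2 * n₀ + 4 : ℕ) * 16 := by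
        ring
      have hp4 : (0:ℝ) < (4:ℝ) ^ (2 * n₀ + 4 : ℕ) := by positivity
      calc (4:ℝ) ^ (N:ℕ) = (4:ℝ) ^ (2 * n₀ + 4 : ℕ) * (4:ℝ) ^ (⌈c⌉₊ : ℕ) := e1
        _ ≤ (4:ℝ) ^ (2 * n₀ + 4 : ℕ) * ((1 + t) ^ δ * 4) := by
            rw [← e3]
            exact mul_le_mul_of_nonneg_left e2 hp4.le
        _ ≤ (4:ℝ) ^ (2 * n₀ + 4 : ℕ) * (2 * (1 + t ^ δ) * 4) := by
            have := mul_le_mul_of_nonneg_right e4 (by norm_num : (0:ℝ) ≤ 4)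
            exact mul_le_mul_of_nonneg_left this hp4.le
        _ ≤ (4:ℝ) ^ (2 * n₀ + 6 : ℕ) * (1 + t ^ δ) := by
            rw [e5]
            nlinarith
    -- final assembly
    have hFour := norm_fourier_gCantor_le hα N ξ hξ
    have hvol := tail_vol hα δ hδ0 hδ1.le n₀ hsmall N hNn₀ ξ hξ1 hS
    have htoReal : (volume (cantorStage α N \ gCantorSet α)).toReal ≤ 1 / |ξ| :=
      ENNReal.toReal_le_of_le_ofReal (by positivity) hvol
    have hF : ‖FourierTransform.fourier ((gCantorSet α).indicator fun _ => (1 : ℂ)) ξ‖ ≤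
        ((2:ℝ) ^ N + 1) / |ξ| := by
      refine hFour.trans ?_
      rw [add_div]
      exact add_le_add_right htoReal _
    have hFsq : ‖FourierTransform.fourier ((gCantorSet α).indicator fun _ => (1 : ℂ)) ξ‖ ^ 2 ≤
        (((2:ℝ) ^ N + 1) / |ξ|) ^ 2 := pow_le_pow_left₀ (norm_nonneg _) hF 2
    rw [div_pow] at hFsq
    have hnum : ((2:ℝ) ^ N + 1) ^ 2 ≤ 4 * (4:ℝ) ^ (N:ℕ) := by
      have h1 : (1:ℝ) ≤ 2 ^ N := one_le_pow₀ (by norm_num)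
      have h2 : ((2:ℝ) ^ N) * 2 ^ N = 4 ^ N := by rw [← mul_pow]; norm_num
      nlinarith
    have hnum2 : 4 * (4:ℝ) ^ (N:ℕ) ≤ (4:ℝ) ^ (2 * n₀ + 7) * (1 + t ^ δ) := by
      have h1 := mul_le_mul_of_nonneg_left h4N (by norm_num : (0:ℝ) ≤ 4)
      have h2 : (4:ℝ) ^ (2 * n₀ + 7 : ℕ) = 4 * (4:ℝ) ^ (2 * n₀ + 6 : ℕ) := by
        rw [pow_succ]
        ring
      rw [h2]
      linarith [h1]
    refine hFsq.trans ?_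
    have hden : (0:ℝ) < |ξ| ^ 2 := by positivity
    rw [div_le_div_iff₀ hden hden]
    nlinarith [sq_nonneg (|ξ|), hden]
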